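/- Failure of the Lévy martingale characterization of Brownian motion on time scales: There exist a bounded time scale 𝕋 (one may take 𝕋 = {0, 1}), a probability space (Ω, 𝒜, P) with a filtration (ℱ_t)_{t∈𝕋}, and a martingale X = (X_t)_{t∈𝕋} with respect to (ℱ_t) such that X_0 = 0 almost surely and (X_t² − t)_{t∈𝕋} is a martingale, yet X is not a Brownian motion indexed by 𝕋: the law of X_1 under P is not the standard Gaussian measure N(0,1) on ℝ. -/

import Mathlib

open MeasureTheory ProbabilityTheory

noncomputable section

namespace Stmt10Aux

instance : MeasurableSpace Bool := ⊤

def myP : Measure Bool :=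
  (2 : ENNReal)⁻¹ • (Measure.dirac true + Measure.dirac false)

instance myP_prob : IsProbabilityMeasure myP := by
  constructor
  simp [myP, Measure.smul_apply]
  rw [← two_mul, ENNReal.mul_inv_cancel] <;> norm_num

def myT : Set ℝ := {0, 1}

lemma myT_cases (t : myT) : (t : ℝ) = 0 ∨ (t : ℝ) = 1 := t.2

def myF : Filtration myT (inferInstance : MeasurableSpace Bool) where
  seq := fun t => if (t : ℝ) = 0 then ⊥ else ⊤
  mono' := by
    intro s t hst
    rcases myT_cases s with hs | hs
    · simp [hs]
    · rcases myT_cases t with ht | ht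
      · exfalso
        have : (s : ℝ) ≤ (t : ℝ) := hst
        rw [hs, ht] at this; linarith
      · simp [hs, ht]
  le' := fun _ => le_top

def myX : myT → Bool → ℝ :=
  fun t ω => if (t : ℝ) = 0 then 0 else (if ω then 1 else -1)

lemma meas_top {f : Bool → ℝ} : @StronglyMeasurable Bool ℝ _ ⊤ f :=
  Measurable.stronglyMeasurable (measurable_from_top)

lemma myX_int (t : myT) : Integrable (myX t) myP := Integrable.of_finite

lemma myX_integral (h : (1:ℝ) ∈ myT) : ∫ x, myX ⟨1, h⟩ x ∂myP = 0 := by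
  rw [myP, integral_smul_measure, integral_add_measure Integrable.of_finite
    Integrable.of_finite, integral_dirac, integral_dirac]
  simp [myX]

lemma myX_mart : Martingale myX myF myP := by
  constructor
  · intro t
    rcases myT_cases t with ht | ht
    · have : myX t = fun _ => (0:ℝ) := by funext ω; simp [myX, ht]
      rw [this]
      exact stronglyMeasurable_const
    · have hne : (t:ℝ) ≠ 0 := by rw [ht]; norm_num
      have : myF t = ⊤ := by simp [myF, hne]
      rw [this]
      exact meas_top
  · intro s t hst
    rcases myT_cases t with ht | ht
    · -- t = 0, so s = 0, X t = X s = 0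
      have hs : (s:ℝ) = 0 := by
        rcases myT_cases s with h | h
        · exact h
        · exfalso; have : (s:ℝ) ≤ (t:ℝ) := hst; rw [h, ht] at this; linarith
      have h0 : myX t = fun _ => (0:ℝ) := by funext ω; simp [myX, ht]
      have h0' : myX s = fun _ => (0:ℝ) := by funext ω; simp [myX, hs]
      rw [h0, h0']
      exact Filter.EventuallyEq.of_eq (condExp_const (myF.le s) 0)
    · have hne : (t:ℝ) ≠ 0 := by rw [ht]; norm_num
      rcases myT_cases s with hs | hs
      · -- s = 0 : F s = ⊥
        have hFs : myF s = ⊥ := by simp [myF, hs]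
        rw [hFs, condExp_bot]
        have h0' : myX s = fun _ => (0:ℝ) := by funext ω; simp [myX, hs]
        rw [h0']
        refine Filter.EventuallyEq.of_eq ?_
        funext ω
        have : (t:ℝ) = 1 := ht
        have := myX_integral (by rw [← this]; exact t.2)
        rw [show (⟨(1:ℝ), by right; rfl⟩ : myT) = t from Subtype.ext ht.symm] at this
        rw [this]
      · -- s = 1 : F s = ⊤
        have hsne : (s:ℝ) ≠ 0 := by rw [hs]; norm_num
        have hFs : myF s = ⊤ := by simp [myF, hsne]
        have hst' : s = t := Subtype.ext (hs.trans ht.symm)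
        rw [hFs, hst']
        exact (condExp_of_stronglyMeasurable le_top meas_top (myX_int t)).symm ▸
          Filter.EventuallyEq.refl _ _

end Stmt10Aux

namespace Stmt10Aux

lemma myX2_mart (h0 : (0:ℝ) ∈ myT) :
    Martingale (fun (t : myT) ω => (myX t ω) ^ 2 - (t : ℝ)) myF myP := by
  have : (fun (t : myT) ω => (myX t ω) ^ 2 - (t : ℝ)) = 0 := by
    funext t ω
    rcases myT_cases t with ht | ht
    · simp [myX, ht]
    · have hne : (t:ℝ) ≠ 0 := by rw [ht]; norm_num
      cases ω <;> simp [myX, hne, ht]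
  rw [this]
  exact martingale_zero _ _ _

lemma myX_map (h : (1:ℝ) ∈ myT) :
    Measure.map (myX ⟨1, h⟩) myP ≠ gaussianReal 0 1 := by
  intro hcontra
  have h1 : Measure.map (myX ⟨1, h⟩) myP {1} = 2⁻¹ := by
    rw [Measure.map_apply measurable_from_top (measurableSet_singleton 1)]
    have hpre : myX ⟨1, h⟩ ⁻¹' {1} = {true} := by
      ext ω; cases ω <;> simp [myX] <;> norm_num
    rw [hpre, myP]
    simp [Measure.smul_apply]
  have h2 : gaussianReal 0 1 {1} = 0 :=
    gaussianReal_absolutelyContinuous 0 one_ne_zero Real.volume_singleton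
  rw [hcontra, h2] at h1
  exact (by norm_num : (2:ENNReal)⁻¹ ≠ 0) h1.symm

end Stmt10Aux

open Stmt10Aux in
theorem stmt_10 :
    ∃ (T : Set ℝ) (_ : IsClosed T) (_ : T.Nonempty) (_ : Bornology.IsBounded T)
      (h0T : (0 : ℝ) ∈ T) (h1T : (1 : ℝ) ∈ T)
      (Ω : Type) (mΩ : MeasurableSpace Ω) (P : Measure Ω) (_ : IsProbabilityMeasure P)
      (ℱ : Filtration ↥T mΩ) (X : ↥T → Ω → ℝ),
      Martingale X ℱ P ∧
      X ⟨0, h0T⟩ =ᵐ[P] 0 ∧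
      Martingale (fun (t : ↥T) ω => (X t ω) ^ 2 - (t : ℝ)) ℱ P ∧
      Measure.map (X ⟨1, h1T⟩) P ≠ gaussianReal 0 1 := by
  refine ⟨myT, ?_, ⟨0, Or.inl rfl⟩, ?_, Or.inl rfl, Or.inr rfl,
    Bool, inferInstance, myP, myP_prob, myF, myX, myX_mart, ?_, myX2_mart (Or.inl rfl),
    myX_map (Or.inr rfl)⟩
  · exact ((Set.finite_singleton (1:ℝ)).insert 0).isClosed
  · exact ((Set.finite_singleton (1:ℝ)).insert 0).isBounded
  · refine Filter.EventuallyEq.of_eq (funext fun ω => ?_)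
    simp [myX]
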